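/- Second-order accuracy of the van Albada limiter: if u is C³ on a neighborhood of x with u'(x) ≠ 0, and a(h) = (u(x) − u(x−h))/h, b(h) = (u(x+h) − u(x))/h, then ψ_vA(a(h), b(h)) = u'(x) + O(h²) as h → 0⁺; more precisely ψ_vA(a(h),b(h)) − u'(x) = (u'''(x)/6 − (u''(x))²/(2u'(x)))·h² + o(h²). -/

import Mathlib

noncomputable def vanAlbada (a b : ℝ) : ℝ := (a ^ 2 * b + a * b ^ 2) / (a ^ 2 + b ^ 2)

noncomputable def Mpoly (c1 c2 c3 h p q : ℝ) : ℝ :=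
  (2:ℝ) * c1^3 * p
    + (2:ℝ) * c1^3 * q
    + (4:ℝ) * c1^2 * c2 * h * p
    + (-4:ℝ) * c1^2 * c2 * h * q
    + ((2:ℝ)/3) * c1^2 * c3 * h^2 * p
    + ((2:ℝ)/3) * c1^2 * c3 * h^2 * q
    + (8:ℝ) * c1^2 * h^2 * p * q
    + ((1:ℝ)/3) * c1 * c2^2 * c3 * h^2
    + ((3:ℝ)/2) * c1 * c2^2 * h^2 * p
    + ((3:ℝ)/2) * c1 * c2^2 * h^2 * q
    + ((2:ℝ)/3) * c1 * c2 * c3 * h^3 * p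
    + ((-2:ℝ)/3) * c1 * c2 * c3 * h^3 * q
    + (1:ℝ) * c1 * c2 * h^3 * p^2
    + (-1:ℝ) * c1 * c2 * h^3 * q^2
    + ((1:ℝ)/18) * c1 * c3^2 * h^4 * p
    + ((1:ℝ)/18) * c1 * c3^2 * h^4 * q
    + ((4:ℝ)/3) * c1 * c3 * h^4 * p * q
    + (2:ℝ) * c1 * h^4 * p^2 * q
    + (2:ℝ) * c1 * h^4 * p * q^2
    + ((1:ℝ)/2) * c2^4 * h^2
    + (-1:ℝ) * c2^3 * h^3 * p
    + (1:ℝ) * c2^3 * h^3 * q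
    + ((1:ℝ)/18) * c2^2 * c3^2 * h^4
    + ((1:ℝ)/3) * c2^2 * c3 * h^4 * p
    + ((1:ℝ)/3) * c2^2 * c3 * h^4 * q
    + (1:ℝ) * c2^2 * h^4 * p^2
    + (1:ℝ) * c2^2 * h^4 * q^2

set_option maxHeartbeats 1600000 in
lemma vanAlbada_key (c1 c2 c3 h p q a b : ℝ) (hh : h ≠ 0) (hc1 : c1 ≠ 0)
    (ha : a = c1 - c2 * h / 2 + (c3 / 6 + p) * h ^ 2)
    (hb : b = c1 + c2 * h / 2 + (c3 / 6 + q) * h ^ 2)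
    (hD : a ^ 2 + b ^ 2 ≠ 0) :
    (vanAlbada a b - c1 - (c3 / 6 - c2 ^ 2 / (2 * c1)) * h ^ 2) / h ^ 2
      = Mpoly c1 c2 c3 h p q / (2 * c1 * (a ^ 2 + b ^ 2)) := by
  have key2 : (a ^ 2 * b + a * b ^ 2) * (2 * c1)
      - (2 * c1 ^ 2 + (c1 * c3 / 3 - c2 ^ 2) * h ^ 2) * (a ^ 2 + b ^ 2)
      = Mpoly c1 c2 c3 h p q * h ^ 2 := by
    subst ha hb; unfold Mpoly; ring
  have hv : vanAlbada a b - c1 - (c3 / 6 - c2 ^ 2 / (2 * c1)) * h ^ 2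
      = ((a ^ 2 * b + a * b ^ 2) * (2 * c1)
          - (2 * c1 ^ 2 + (c1 * c3 / 3 - c2 ^ 2) * h ^ 2) * (a ^ 2 + b ^ 2))
        / (2 * c1 * (a ^ 2 + b ^ 2)) := by
    unfold vanAlbada
    field_simp
    ring
  rw [hv, key2, div_div, mul_comm (2 * c1 * (a ^ 2 + b ^ 2)) (h ^ 2), ← div_div,
    mul_div_assoc, div_self (pow_ne_zero 2 hh), mul_one]

open Filter Set Topology

lemma taylor3 (u : ℝ → ℝ) (x : ℝ) (hu : ContDiffAt ℝ 3 u x) :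
    Tendsto (fun h : ℝ =>
        (u (x + h) - (u x + deriv u x * h + iteratedDeriv 2 u x * h ^ 2 / 2
          + iteratedDeriv 3 u x * h ^ 3 / 6)) / h ^ 3)
      (𝓝[≠] 0) (𝓝 0) := by
  obtain ⟨s, hs_mem, hs⟩ := hu.contDiffOn le_rfl (by simp)
  obtain ⟨t, hts, hto, hxt⟩ := mem_nhds_iff.mp hs_mem
  replace hs : ContDiffOn ℝ 3 u t := hs.mono hts
  set c1 := deriv u x with hc1
  set c2 := iteratedDeriv 2 u x with hc2
  set c3 := iteratedDeriv 3 u x with hc3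
  have h2eq : iteratedDeriv 2 u = deriv (deriv u) := by
    rw [show (2 : ℕ) = 1 + 1 from rfl, iteratedDeriv_succ, iteratedDeriv_one]
  have h3eq : iteratedDeriv 3 u = deriv (deriv (deriv u)) := by
    rw [show (3 : ℕ) = 2 + 1 from rfl, iteratedDeriv_succ, h2eq]
  have hd1 : ContDiffOn ℝ 2 (deriv u) t := hs.deriv_of_isOpen hto (by norm_num)
  have hd2 : ContDiffOn ℝ 1 (deriv (deriv u)) t := hd1.deriv_of_isOpen hto (by norm_num)
  have hu' : ∀ y ∈ t, HasDerivAt u (deriv u y) y := fun y hy =>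
    ((hs.differentiableOn (by norm_num)).differentiableAt (hto.mem_nhds hy)).hasDerivAt
  have hu'' : ∀ y ∈ t, HasDerivAt (deriv u) (deriv (deriv u) y) y := fun y hy =>
    ((hd1.differentiableOn (by norm_num)).differentiableAt (hto.mem_nhds hy)).hasDerivAt
  have hu''' : HasDerivAt (deriv (deriv u)) c3 x := by
    rw [hc3, h3eq]
    exact ((hd2.differentiableOn (by norm_num)).differentiableAt (hto.mem_nhds hxt)).hasDerivAt
  have htr : Tendsto (fun h : ℝ => x + h) (𝓝 0) (𝓝 x) := by
    have := (continuous_add_left x).tendsto (0 : ℝ); rwa [add_zero] at this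
  have ev : ∀ᶠ h : ℝ in 𝓝 0, x + h ∈ t := htr.eventually (hto.eventually_mem hxt)
  -- g, g1, g2
  have hgg1 : ∀ᶠ h : ℝ in 𝓝 0, HasDerivAt
      (fun h : ℝ => u (x + h) - (u x + c1 * h + c2 * h ^ 2 / 2 + c3 * h ^ 3 / 6))
      (deriv u (x + h) - (c1 + c2 * h + c3 * h ^ 2 / 2)) h := by
    filter_upwards [ev] with h hh
    have A : HasDerivAt (fun h : ℝ => u (x + h)) (deriv u (x + h)) h := by
      simpa [Function.comp_def] using (hu' _ hh).comp h ((hasDerivAt_id h).const_add x)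
    have B : HasDerivAt (fun y : ℝ => u x + c1 * y + c2 * y ^ 2 / 2 + c3 * y ^ 3 / 6)
        (c1 + c2 * h + c3 * h ^ 2 / 2) h := by
      have B0 : HasDerivAt (fun y : ℝ => u x + c1 * y + c2 * y ^ 2 / 2 + c3 * y ^ 3 / 6)
          (0 + c1 * 1 + c2 * (↑2 * h ^ 1) / 2 + c3 * (↑3 * h ^ 2) / 6) h :=
        (((hasDerivAt_const h (u x)).add ((hasDerivAt_id h).const_mul c1)).add
          (((hasDerivAt_pow 2 h).const_mul c2).div_const 2)).add
          (((hasDerivAt_pow 3 h).const_mul c3).div_const 6)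
      convert B0 using 1
      push_cast; ring
    exact A.sub B
  have hgg2 : ∀ᶠ h : ℝ in 𝓝 0, HasDerivAt
      (fun h : ℝ => deriv u (x + h) - (c1 + c2 * h + c3 * h ^ 2 / 2))
      (deriv (deriv u) (x + h) - (c2 + c3 * h)) h := by
    filter_upwards [ev] with h hh
    have A : HasDerivAt (fun h : ℝ => deriv u (x + h)) (deriv (deriv u) (x + h)) h := by
      simpa [Function.comp_def] using (hu'' _ hh).comp h ((hasDerivAt_id h).const_add x)
    have B : HasDerivAt (fun y : ℝ => c1 + c2 * y + c3 * y ^ 2 / 2) (c2 + c3 * h) h := by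
      have B0 : HasDerivAt (fun y : ℝ => c1 + c2 * y + c3 * y ^ 2 / 2)
          (0 + c2 * 1 + c3 * (↑2 * h ^ 1) / 2) h :=
        ((hasDerivAt_const h c1).add ((hasDerivAt_id h).const_mul c2)).add
          (((hasDerivAt_pow 2 h).const_mul c3).div_const 2)
      convert B0 using 1
      push_cast; ring
    exact A.sub B
  -- innermost limit via derivative definition
  have hφ : HasDerivAt (fun h : ℝ => deriv (deriv u) (x + h)) c3 0 := by
    have h1 : HasDerivAt (fun h : ℝ => x + h) 1 0 := by
      simpa using (hasDerivAt_id (0 : ℝ)).const_add x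
    have h2 : HasDerivAt (deriv (deriv u)) c3 ((fun h : ℝ => x + h) 0) := by
      simpa using hu'''
    simpa [Function.comp_def] using h2.comp 0 h1
  have hslope : Tendsto (fun h : ℝ => (deriv (deriv u) (x + h) - deriv (deriv u) (x + 0)) / h)
      (𝓝[≠] 0) (𝓝 c3) := by
    have := hasDerivAt_iff_tendsto_slope.mp hφ
    simpa [slope_fun_def_field] using this
  have hφ0 : deriv (deriv u) (x + 0) = c2 := by rw [add_zero, hc2, h2eq]
  have L2 : Tendsto (fun h : ℝ => (deriv (deriv u) (x + h) - (c2 + c3 * h)) / (6 * h))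
      (𝓝[≠] 0) (𝓝 0) := by
    have h0 := (hslope.sub_const c3).div_const 6
    rw [sub_self, zero_div] at h0
    apply h0.congr'
    filter_upwards [self_mem_nhdsWithin] with h hh
    have hh' : h ≠ 0 := hh
    rw [hφ0]
    field_simp
    ring
  -- first L'Hopital
  have L1 : Tendsto (fun h : ℝ =>
      (deriv u (x + h) - (c1 + c2 * h + c3 * h ^ 2 / 2)) / (3 * h ^ 2)) (𝓝[≠] 0) (𝓝 0) := by
    apply HasDerivAt.lhopital_zero_nhdsNE (g' := fun h : ℝ => 6 * h)
      (hgg2.filter_mono nhdsWithin_le_nhds)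
    · refine Eventually.of_forall fun h => ?_
      have h0 : HasDerivAt (fun y : ℝ => 3 * y ^ 2) (3 * (↑2 * h ^ 1)) h :=
        (hasDerivAt_pow 2 h).const_mul 3
      convert h0 using 1
      push_cast; ring
    · filter_upwards [self_mem_nhdsWithin] with h hh
      exact mul_ne_zero (by norm_num) (hh : h ≠ 0)
    · have hcφ : ContinuousAt (fun h : ℝ => deriv u (x + h)) 0 := by
        have : ContinuousAt (deriv u) ((fun h : ℝ => x + h) 0) := by
          simpa using ((hu'' x hxt).differentiableAt.continuousAt)
        exact this.comp (by fun_prop)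
      have : ContinuousAt (fun h : ℝ => deriv u (x + h) - (c1 + c2 * h + c3 * h ^ 2 / 2)) 0 :=
        hcφ.sub (by fun_prop)
      have h0 := this.continuousWithinAt (s := {(0:ℝ)}ᶜ) |>.tendsto
      simpa [hc1] using h0
    · have : Tendsto (fun h : ℝ => 3 * h ^ 2) (𝓝 0) (𝓝 (3 * 0 ^ 2)) :=
        (continuous_const.mul (continuous_pow 2)).tendsto 0
      simpa using this.mono_left nhdsWithin_le_nhds
    · exact L2
  -- second L'Hopital
  apply HasDerivAt.lhopital_zero_nhdsNE (g' := fun h : ℝ => 3 * h ^ 2)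
    (hgg1.filter_mono nhdsWithin_le_nhds)
  · refine Eventually.of_forall fun h => ?_
    have h0 : HasDerivAt (fun y : ℝ => y ^ 3) (↑3 * h ^ 2) h := hasDerivAt_pow 3 h
    convert h0 using 1 <;> push_cast <;> ring
  · filter_upwards [self_mem_nhdsWithin] with h hh
    exact mul_ne_zero (by norm_num) (pow_ne_zero 2 (hh : h ≠ 0))
  · have hcu : ContinuousAt (fun h : ℝ => u (x + h)) 0 := by
      have : ContinuousAt u ((fun h : ℝ => x + h) 0) := by
        simpa using (hu' x hxt).differentiableAt.continuousAt
      exact this.comp (by fun_prop)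
    have : ContinuousAt
        (fun h : ℝ => u (x + h) - (u x + c1 * h + c2 * h ^ 2 / 2 + c3 * h ^ 3 / 6)) 0 :=
      hcu.sub (by fun_prop)
    have h0 := this.continuousWithinAt (s := {(0:ℝ)}ᶜ) |>.tendsto
    simpa using h0
  · have : Tendsto (fun h : ℝ => h ^ 3) (𝓝 0) (𝓝 ((0:ℝ) ^ 3)) :=
      (continuous_pow 3).tendsto 0
    simpa using this.mono_left nhdsWithin_le_nhds
  · exact L1


open Asymptotics in
/-- Second-order accuracy of the van Albada limiter at non-critical points:
for `u` of class C³ near `x` with `u'(x) ≠ 0`, applying the limiter to the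
one-sided difference quotients reproduces `u'(x)` up to the explicit `h²`
term, with `o(h²)` error as `h → 0⁺`. -/
theorem vanAlbada_second_order_accuracy (u : ℝ → ℝ) (x : ℝ)
    (hu : ContDiffAt ℝ 3 u x) (hux : deriv u x ≠ 0) :
    (fun h : ℝ =>
        vanAlbada ((u x - u (x - h)) / h) ((u (x + h) - u x) / h)
        - deriv u x
        - (iteratedDeriv 3 u x / 6
            - (iteratedDeriv 2 u x) ^ 2 / (2 * deriv u x)) * h ^ 2)
      =o[nhdsWithin 0 (Set.Ioi 0)] fun h : ℝ => h ^ 2 := by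
  set c1 := deriv u x with hc1
  set c2 := iteratedDeriv 2 u x with hc2
  set c3 := iteratedDeriv 3 u x with hc3
  have hT := taylor3 u x hu
  rw [← hc1, ← hc2, ← hc3] at hT
  -- p and q
  set p : ℝ → ℝ := fun h =>
    (u (x + -h) - (u x + c1 * -h + c2 * (-h) ^ 2 / 2 + c3 * (-h) ^ 3 / 6)) / (-h) ^ 3 with hpd
  set q : ℝ → ℝ := fun h =>
    (u (x + h) - (u x + c1 * h + c2 * h ^ 2 / 2 + c3 * h ^ 3 / 6)) / h ^ 3 with hqd
  have hsub : 𝓝[>] (0:ℝ) ≤ 𝓝[≠] (0:ℝ) :=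
    nhdsWithin_mono 0 fun y hy => Set.mem_compl_singleton_iff.mpr (ne_of_gt hy)
  have hq : Tendsto q (𝓝[>] 0) (𝓝 0) := hT.mono_left hsub
  have hneg : Tendsto (fun h : ℝ => -h) (𝓝[>] (0:ℝ)) (𝓝[≠] (0:ℝ)) := by
    apply tendsto_nhdsWithin_of_tendsto_nhds_of_eventually_within
    · have : Tendsto (fun h : ℝ => -h) (𝓝 (0:ℝ)) (𝓝 (-0 : ℝ)) := continuous_neg.tendsto 0
      simpa using this.mono_left nhdsWithin_le_nhds
    · filter_upwards [self_mem_nhdsWithin] with h hh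
      exact Set.mem_compl_singleton_iff.mpr (neg_ne_zero.mpr (ne_of_gt hh))
  have hp : Tendsto p (𝓝[>] 0) (𝓝 0) := hT.comp hneg
  -- identities for the difference quotients
  have ha_eq : ∀ h : ℝ, h ≠ 0 →
      (u x - u (x - h)) / h = c1 - c2 * h / 2 + (c3 / 6 + p h) * h ^ 2 := by
    intro h hh
    simp only [hpd]
    rw [show x - h = x + -h by ring, show ((-h) ^ 3 : ℝ) = -(h ^ 3) by ring]
    field_simp
    ring
  have hb_eq : ∀ h : ℝ, h ≠ 0 →
      (u (x + h) - u x) / h = c1 + c2 * h / 2 + (c3 / 6 + q h) * h ^ 2 := by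
    intro h hh
    simp only [hqd]
    field_simp
    ring
  have h0 : Tendsto (fun h : ℝ => h) (𝓝[>] (0:ℝ)) (𝓝 0) :=
    tendsto_id.mono_left nhdsWithin_le_nhds
  -- limits of the difference quotients
  have harith : ∀ r : ℝ → ℝ, Tendsto r (𝓝[>] (0:ℝ)) (𝓝 0) → ∀ sgn : ℝ,
      Tendsto (fun h => c1 + sgn * (c2 * h / 2) + (c3 / 6 + r h) * h ^ 2)
        (𝓝[>] (0:ℝ)) (𝓝 c1) := by
    intro r hr sgn
    have := (tendsto_const_nhds (x := c1)).add
      (((tendsto_const_nhds (x := sgn)).mul ((tendsto_const_nhds (x := c2)).mul h0 |>.div_const 2)).add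
        (((tendsto_const_nhds (x := c3 / 6)).add hr).mul (h0.pow 2)))
    have heq : c1 + (sgn * (c2 * 0 / 2) + (c3 / 6 + 0) * 0 ^ 2) = c1 := by ring
    rw [heq] at this
    exact this.congr fun h => by ring
  have ha_lim : Tendsto (fun h : ℝ => (u x - u (x - h)) / h) (𝓝[>] 0) (𝓝 c1) := by
    apply Tendsto.congr' _ (harith p hp (-1))
    filter_upwards [self_mem_nhdsWithin] with h hh
    rw [ha_eq h (ne_of_gt hh)]; ring
  have hb_lim : Tendsto (fun h : ℝ => (u (x + h) - u x) / h) (𝓝[>] 0) (𝓝 c1) := by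
    apply Tendsto.congr' _ (harith q hq 1)
    filter_upwards [self_mem_nhdsWithin] with h hh
    rw [hb_eq h (ne_of_gt hh)]; ring
  have hD_lim : Tendsto
      (fun h : ℝ => ((u x - u (x - h)) / h) ^ 2 + ((u (x + h) - u x) / h) ^ 2)
      (𝓝[>] 0) (𝓝 (2 * c1 ^ 2)) := by
    have := (ha_lim.pow 2).add (hb_lim.pow 2)
    rw [show c1 ^ 2 + c1 ^ 2 = 2 * c1 ^ 2 by ring] at this
    exact this
  have hDne : ∀ᶠ h : ℝ in 𝓝[>] 0,
      ((u x - u (x - h)) / h) ^ 2 + ((u (x + h) - u x) / h) ^ 2 ≠ 0 :=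
    hD_lim.eventually_ne (mul_ne_zero two_ne_zero (pow_ne_zero 2 hux))
  -- limit of the numerator
  have hMcont : Continuous fun v : ℝ × ℝ × ℝ => Mpoly c1 c2 c3 v.1 v.2.1 v.2.2 := by
    unfold Mpoly; fun_prop
  have hvlim : Tendsto (fun h : ℝ => ((h, p h, q h) : ℝ × ℝ × ℝ)) (𝓝[>] 0)
      (𝓝 ((0, 0, 0) : ℝ × ℝ × ℝ)) := h0.prodMk_nhds (hp.prodMk_nhds hq)
  have hMlim : Tendsto (fun h : ℝ => Mpoly c1 c2 c3 h (p h) (q h)) (𝓝[>] 0) (𝓝 0) := by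
    have := (hMcont.tendsto ((0, 0, 0) : ℝ × ℝ × ℝ)).comp hvlim
    have hM0 : Mpoly c1 c2 c3 0 0 0 = 0 := by unfold Mpoly; ring
    rw [hM0] at this
    exact this
  have hfinal : Tendsto (fun h : ℝ => Mpoly c1 c2 c3 h (p h) (q h)
      / (2 * c1 * (((u x - u (x - h)) / h) ^ 2 + ((u (x + h) - u x) / h) ^ 2)))
      (𝓝[>] 0) (𝓝 0) := by
    have hd := (tendsto_const_nhds (x := 2 * c1)).mul hD_lim
    have hne : 2 * c1 * (2 * c1 ^ 2) ≠ 0 :=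
      mul_ne_zero (mul_ne_zero two_ne_zero hux) (mul_ne_zero two_ne_zero (pow_ne_zero 2 hux))
    have := hMlim.div hd hne
    rwa [zero_div] at this
  -- conclude
  rw [Asymptotics.isLittleO_iff_tendsto']
  · apply Tendsto.congr' _ hfinal
    filter_upwards [self_mem_nhdsWithin, hDne] with h hh hD
    have hh' : h ≠ 0 := ne_of_gt hh
    exact (vanAlbada_key c1 c2 c3 h (p h) (q h) _ _ hh' hux
      (ha_eq h hh') (hb_eq h hh') hD).symm
  · filter_upwards [self_mem_nhdsWithin] with h hh h2
    exact absurd h2 (pow_ne_zero 2 (ne_of_gt hh))
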